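/- Let C be a finitely complete small category with admissible class M. For every object C, every m ∈ M/C, and every sieve S on C, one has ¬¬_C(S·m) ⊆ ¬¬_C(S)·m, where ¬¬_C(S) = {h | ∃ k with codomain dom h such that h∘k ∈ S} is the double negation (atomic) topology and S·m = {h | m × h ∈ S}. Moreover, if in C every composable pair of morphisms forms part of a pullback square (i.e., for every s : D → E and t : E → F there exist morphisms completing s, t to a pullback square with t∘s as one diagonal composite), then ¬¬_C(S·m) = ¬¬_C(S)·m, i.e., ¬¬ is M-action preserving. -/
import Mathlib


open CategoryTheory Opposite CategoryTheory.Limits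

universe v u

variable {C : Type u} [Category.{v} C] [HasFiniteLimits C]

/-- An admissible class of monomorphisms on a finitely complete category `C`:
contains identities, closed under composition, and stable under pullback. -/
structure AdmissibleClass (C : Type u) [Category.{v} C] [HasFiniteLimits C] where
  cls : ∀ ⦃Y X : C⦄, (Y ⟶ X) → Prop
  mono : ∀ ⦃Y X : C⦄ (f : Y ⟶ X), cls f → Mono f
  id_mem : ∀ X : C, cls (𝟙 X)
  comp_mem : ∀ ⦃Z Y X : C⦄ (g : Z ⟶ Y) (f : Y ⟶ X), cls g → cls f → cls (g ≫ f)
  pullback_stable : ∀ ⦃A B X : C⦄ (f : A ⟶ X) (m : B ⟶ X), cls m →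
    cls (pullback.fst f m)

/-- The diagonal `f × g = f ∘ f⁻¹(g)` of the pullback of `f` and `g` over `X`,
i.e. the product of `f` and `g` in the slice over `X`. -/
noncomputable def dprod {A B X : C} (f : A ⟶ X) (g : B ⟶ X) : pullback f g ⟶ X :=
  pullback.fst f g ≫ f

/-- The action of an arrow `m : A ⟶ X` on sieves: `S·m = { h | m × h ∈ S }`. -/
noncomputable def sieveAct {X A : C} (S : Sieve X) (m : A ⟶ X) : Sieve X where
  arrows := fun _Y h => S (pullback.fst m h ≫ m)
  downward_closed := by
    intro Y Z h hh g
    have hl : pullback.lift (pullback.fst m (g ≫ h)) (pullback.snd m (g ≫ h) ≫ g)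
        (by rw [pullback.condition]; simp) ≫ pullback.fst m h
        = pullback.fst m (g ≫ h) := pullback.lift_fst _ _ _
    show S (pullback.fst m (g ≫ h) ≫ m)
    rw [← hl, Category.assoc]
    exact S.downward_closed hh _

/-- The double negation (atomic) topology: `¬¬(S) = { h | ∃ k, h∘k ∈ S }`. -/
noncomputable def negneg {X : C} (S : Sieve X) : Sieve X where
  arrows := fun _Y h => ∃ (W : C) (k : W ⟶ _Y), S (k ≫ h)
  downward_closed := by
    rintro Y Z h ⟨W, k, hk⟩ g
    refine ⟨pullback g k, pullback.fst g k, ?_⟩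
    rw [← Category.assoc, pullback.condition, Category.assoc]
    exact S.downward_closed hk _

/-- `¬¬(S·m) ⊆ ¬¬(S)·m` always; and if every composable pair in `C`
forms part of a pullback square, then `¬¬(S·m) = ¬¬(S)·m`, i.e. `¬¬` is `M`-action
preserving. -/
theorem negneg_action (M : AdmissibleClass C) :
    (∀ (X A : C) (m : A ⟶ X), M.cls m → ∀ S : Sieve X,
        negneg (sieveAct S m) ≤ sieveAct (negneg S) m) ∧
    ((∀ ⦃D E F : C⦄ (s : D ⟶ E) (t : E ⟶ F),
        ∃ (B : C) (k : D ⟶ B) (h : B ⟶ F), IsPullback k s h t) →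
      ∀ (X A : C) (m : A ⟶ X), M.cls m → ∀ S : Sieve X,
        negneg (sieveAct S m) = sieveAct (negneg S) m) := by
  have part1 : ∀ (X A : C) (m : A ⟶ X), M.cls m → ∀ S : Sieve X,
      negneg (sieveAct S m) ≤ sieveAct (negneg S) m := by
    intro X A m _ S Y h hh
    obtain ⟨W, k, hk⟩ := hh
    have hk' : S (pullback.fst m (k ≫ h) ≫ m) := hk
    refine ⟨pullback m (k ≫ h),
      pullback.lift (pullback.fst m (k ≫ h)) (pullback.snd m (k ≫ h) ≫ k)
        (by rw [pullback.condition]; simp), ?_⟩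
    rw [← Category.assoc, pullback.lift_fst]
    exact hk'
  refine ⟨part1, fun hyp X A m hm S => le_antisymm (part1 X A m hm S) ?_⟩
  intro Y h hh
  obtain ⟨W, k, hk⟩ := (hh : ∃ (W : C) (k : W ⟶ _), S (k ≫ pullback.fst m h ≫ m))
  obtain ⟨B, k₂, h₂, hpb⟩ := hyp k (pullback.snd m h)
  refine ⟨B, h₂, ?_⟩
  show S (pullback.fst m (h₂ ≫ h) ≫ m)
  set v : pullback m (h₂ ≫ h) ⟶ pullback m h :=
    pullback.lift (pullback.fst m (h₂ ≫ h)) (pullback.snd m (h₂ ≫ h) ≫ h₂)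
      (by rw [pullback.condition]; simp) with hv
  have hcomm : pullback.snd m (h₂ ≫ h) ≫ h₂ = v ≫ pullback.snd m h := by
    rw [hv, pullback.lift_snd]
  set w := hpb.lift (pullback.snd m (h₂ ≫ h)) v hcomm with hw
  have hwk : w ≫ k = v := hpb.lift_snd _ _ _
  have : pullback.fst m (h₂ ≫ h) ≫ m = w ≫ (k ≫ pullback.fst m h ≫ m) := by
    rw [← Category.assoc, hwk, hv, ← Category.assoc, pullback.lift_fst]
  rw [this]
  exact S.downward_closed hk w
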